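/- Let (X,F) be a nonautonomous system on a compact metric space generated by a commutative family of homeomorphisms. If the family {ω_{k_n}∘⋯∘ω_{k_1} : k_i ∈ ℤ, n ∈ ℕ} is equicontinuous, then for every x ∈ X the closure of the orbital hull of x is a minimal subsystem. -/

import Mathlib

open Metric Filter

/-- Forward time maps: `posComp f n = f n ∘ ⋯ ∘ f 1`. -/
def posComp {X : Type*} [TopologicalSpace X] (f : ℕ → X ≃ₜ X) : ℕ → X → X
  | 0 => id
  | n + 1 => (f (n + 1)) ∘ posComp f n

/-- Backward time maps: `negComp f n = f 1⁻¹ ∘ ⋯ ∘ f n⁻¹`. -/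
def negComp {X : Type*} [TopologicalSpace X] (f : ℕ → X ≃ₜ X) : ℕ → X → X
  | 0 => id
  | n + 1 => negComp f n ∘ (f (n + 1)).symm

/-- The time-`n` map `ω_n` of the nonautonomous system generated by `f`. -/
def omegaMap {X : Type*} [TopologicalSpace X] (f : ℕ → X ≃ₜ X) (n : ℤ) : X → X :=
  if 0 ≤ n then posComp f n.toNat else negComp f (-n).toNat

/-- The family is commutative. -/
def Commutes {X : Type*} [TopologicalSpace X] (f : ℕ → X ≃ₜ X) : Prop :=
  ∀ i j, ∀ x : X, f i (f j x) = f j (f i x)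

/-- Orbit `O(x) = {ω_n x : n ∈ ℤ}`. -/
def orbit' {X : Type*} [TopologicalSpace X] (f : ℕ → X ≃ₜ X) (x : X) : Set X :=
  Set.range fun n : ℤ => omegaMap f n x

/-- Orbital hull `O_H(x) = {ω_{k_n} ∘ ⋯ ∘ ω_{k_1} x : k_i ∈ ℤ}`. -/
def orbitalHull {X : Type*} [TopologicalSpace X] (f : ℕ → X ≃ₜ X) (x : X) : Set X :=
  {y | ∃ l : List ℤ, y = l.foldr (fun k z => omegaMap f k z) x}

/-- Truncated orbital hull of order `k`. -/
def truncHull {X : Type*} [TopologicalSpace X] (f : ℕ → X ≃ₜ X) (k : ℕ) (x : X) : Set X :=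
  {y | ∃ l : List ℤ, (∀ r ∈ l, |r| ≤ (k : ℤ)) ∧ y = l.foldr (fun j z => omegaMap f j z) x}

/-- `x` is periodic of period `r`: `ω_{n r} x = x` for all `n ∈ ℤ`. -/
def PeriodicPt {X : Type*} [TopologicalSpace X] (f : ℕ → X ≃ₜ X) (r : ℕ) (x : X) : Prop :=
  ∀ n : ℤ, omegaMap f (n * r) x = x

/-- `Y` is invariant: `ω_k(Y) ⊆ Y` for all `k ∈ ℤ`. -/
def Invariant {X : Type*} [TopologicalSpace X] (f : ℕ → X ≃ₜ X) (Y : Set X) : Prop :=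
  ∀ k : ℤ, omegaMap f k '' Y ⊆ Y

/-- The system is minimal: no proper nonempty closed invariant subset. -/
def MinimalSys {X : Type*} [TopologicalSpace X] (f : ℕ → X ≃ₜ X) : Prop :=
  ∀ Y : Set X, Y.Nonempty → IsClosed Y → Invariant f Y → Y = Set.univ


private lemma posComp_negComp' {X : Type*} [TopologicalSpace X] (f : ℕ → X ≃ₜ X) (n : ℕ) :
    ∀ x : X, posComp f n (negComp f n x) = x := by
  induction n with
  | zero => intro x; rfl
  | succ n ih => intro x; simp [posComp, negComp, ih]

private lemma negComp_posComp' {X : Type*} [TopologicalSpace X] (f : ℕ → X ≃ₜ X) (n : ℕ) :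
    ∀ x : X, negComp f n (posComp f n x) = x := by
  induction n with
  | zero => intro x; rfl
  | succ n ih => intro x; simp [posComp, negComp, ih]

private lemma omega_neg_omega {X : Type*} [TopologicalSpace X] (f : ℕ → X ≃ₜ X) (k : ℤ) (x : X) :
    omegaMap f (-k) (omegaMap f k x) = x := by
  rcases lt_trichotomy k 0 with h | h | h
  · have h1 : ¬ (0 ≤ k) := not_le.mpr h
    have h2 : (0 : ℤ) ≤ -k := by omega
    simp [omegaMap, h1, h2, h.le, posComp_negComp']
  · subst h; simp [omegaMap, posComp]
  · have h1 : (0 : ℤ) ≤ k := h.le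
    have h2 : ¬ ((0:ℤ) ≤ -k) := by omega
    simp [omegaMap, h1, h2, not_le.mpr h, negComp_posComp']

private lemma cont_posComp {X : Type*} [TopologicalSpace X] (f : ℕ → X ≃ₜ X) (n : ℕ) :
    Continuous (posComp f n) := by
  induction n with
  | zero => exact continuous_id
  | succ n ih => exact (f (n+1)).continuous.comp ih

private lemma cont_negComp {X : Type*} [TopologicalSpace X] (f : ℕ → X ≃ₜ X) (n : ℕ) :
    Continuous (negComp f n) := by
  induction n with
  | zero => exact continuous_id
  | succ n ih => exact ih.comp (f (n+1)).symm.continuous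

private lemma cont_omega {X : Type*} [TopologicalSpace X] (f : ℕ → X ≃ₜ X) (k : ℤ) :
    Continuous (omegaMap f k) := by
  unfold omegaMap
  split_ifs
  · exact cont_posComp f _
  · exact cont_negComp f _

private def invL (l : List ℤ) : List ℤ := (l.map (fun k => -k)).reverse

private lemma foldr_invL {X : Type*} [TopologicalSpace X] (f : ℕ → X ≃ₜ X) (l : List ℤ) :
    ∀ x : X, (invL l).foldr (fun k z => omegaMap f k z)
      (l.foldr (fun k z => omegaMap f k z) x) = x := by
  induction l with
  | nil => intro x; rfl
  | cons a l ih =>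
    intro x
    have h : invL (a :: l) = invL l ++ [-a] := by simp [invL]
    rw [h, List.foldr_append]
    simp only [List.foldr]
    rw [omega_neg_omega, ih]

private lemma foldr_mem_invSet {X : Type*} [TopologicalSpace X] (f : ℕ → X ≃ₜ X)
    {Z : Set X} (hZ : Invariant f Z) {z : X} (hz : z ∈ Z) (l : List ℤ) :
    l.foldr (fun k w => omegaMap f k w) z ∈ Z := by
  induction l with
  | nil => exact hz
  | cons a l ih => exact hZ a ⟨_, ih, rfl⟩

/-- Equicontinuity of the system. -/
def Equicont {X : Type*} [MetricSpace X] (f : ℕ → X ≃ₜ X) : Prop :=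
  ∀ ε > (0 : ℝ), ∃ δ > (0 : ℝ), ∀ a b : X, dist a b < δ →
    ∀ n : ℤ, dist (omegaMap f n a) (omegaMap f n b) < ε

/-- `S ⊆ ℤ` is `M`-syndetic. -/
def MSyndetic (S : Set ℤ) (M : ℤ) : Prop :=
  ∀ a : ℤ, ∃ n ∈ S, a ≤ n ∧ n < a + M

/-- `x` is almost periodic. -/
def AlmostPeriodicPt {X : Type*} [MetricSpace X] (f : ℕ → X ≃ₜ X) (x : X) : Prop :=
  ∀ ε > (0 : ℝ), ∃ M : ℤ, 0 < M ∧ MSyndetic {n : ℤ | dist (omegaMap f n x) x < ε} M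

/-- The system is sensitive at `x`. -/
def SensitiveAt {X : Type*} [MetricSpace X] (f : ℕ → X ≃ₜ X) (x : X) : Prop :=
  ∃ δ > (0 : ℝ), ∀ U : Set X, IsOpen U → x ∈ U → ∃ m : ℤ, δ < diam (omegaMap f m '' U)

/-- Topological transitivity. -/
def TopTransitive {X : Type*} [TopologicalSpace X] (f : ℕ → X ≃ₜ X) : Prop :=
  ∀ U V : Set X, IsOpen U → IsOpen V → U.Nonempty → V.Nonempty →
    ∃ k : ℤ, ((omegaMap f k '' U) ∩ V).Nonempty

theorem stmt11 {X : Type*} [MetricSpace X] [CompactSpace X] (f : ℕ → X ≃ₜ X)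
    (hcomm : Commutes f)
    (heq : ∀ ε > (0 : ℝ), ∃ δ > (0 : ℝ), ∀ a b : X, dist a b < δ →
      ∀ l : List ℤ, dist (l.foldr (fun k z => omegaMap f k z) a)
        (l.foldr (fun k z => omegaMap f k z) b) < ε) :
    ∀ x : X, Invariant f (closure (orbitalHull f x)) ∧
      ∀ Z : Set X, Z ⊆ closure (orbitalHull f x) → Z.Nonempty → IsClosed Z →
        Invariant f Z → Z = closure (orbitalHull f x) := by
  intro x
  have hullInv : ∀ x : X, Invariant f (closure (orbitalHull f x)) := by
    intro x k
    refine (image_closure_subset_closure_image (cont_omega f k)).trans (closure_mono ?_)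
    rintro _ ⟨y, ⟨l, rfl⟩, rfl⟩
    exact ⟨k :: l, rfl⟩
  refine ⟨hullInv x, ?_⟩
  intro Z hZsub hZne hZcl hZinv
  obtain ⟨z, hz⟩ := hZne
  have hclZ : ∀ w ∈ Z, closure (orbitalHull f w) ⊆ Z := by
    intro w hw
    refine closure_minimal ?_ hZcl
    rintro _ ⟨l, rfl⟩
    exact foldr_mem_invSet f hZinv hw l
  have hx : x ∈ Z := by
    refine hclZ z hz ?_
    rw [Metric.mem_closure_iff]
    intro ε hε
    obtain ⟨δ, hδ, hδ'⟩ := heq ε hε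
    have hzc := hZsub hz
    rw [Metric.mem_closure_iff] at hzc
    obtain ⟨y, ⟨l, rfl⟩, hdist⟩ := hzc δ hδ
    refine ⟨(invL l).foldr (fun k w => omegaMap f k w) z, ⟨invL l, rfl⟩, ?_⟩
    have h2 := hδ' z (l.foldr (fun k w => omegaMap f k w) x) hdist (invL l)
    rw [foldr_invL] at h2
    rw [dist_comm] at h2
    exact h2
  exact subset_antisymm hZsub (hclZ x hx)
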